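/- arXiv:1803.09212 — 2 statements merged into one kernel-verified Lean document; each statement's English description precedes it below -/
import Mathlib

section
/- Let S₁ = E₁₂ and S₂ = E₂₁ be the elementary 2×2 matrices. Suppose M₁, M₂ are normal operators on a Hilbert space K, V : ℂ² → K is an isometry with V*M_iV = S_i for i = 1, 2, M₁M₂ = 0 = M₂M₁, M₁M₂* = 0 = M₁*M₂, and ‖M_i‖ ≤ r for both i. Then r ≥ 2. -/
open ContinuousLinearMap

lemma add_pow_succ_of_mul_eq_zero {R : Type*} [Ring R] {a b : R}
    (hab : a * b = 0) (hba : b * a = 0) (n : ℕ) :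
    (a + b) ^ (n + 1) = a ^ (n + 1) + b ^ (n + 1) := by
  induction n with
  | zero => simp
  | succ n ih =>
    have h1 : a ^ (n + 1) * b = 0 := by rw [pow_succ, mul_assoc, hab, mul_zero]
    have h2 : b ^ (n + 1) * a = 0 := by rw [pow_succ, mul_assoc, hba, mul_zero]
    rw [pow_succ, ih, add_mul, mul_add, mul_add, h1, h2, ← pow_succ, ← pow_succ]
    abel

lemma add_pow_of_mul_eq_zero {R : Type*} [Ring R] {a b : R}
    (hab : a * b = 0) (hba : b * a = 0) {n : ℕ} (hn : 0 < n) :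
    (a + b) ^ n = a ^ n + b ^ n := by
  obtain ⟨m, rfl⟩ := Nat.exists_eq_add_of_lt hn
  simpa using add_pow_succ_of_mul_eq_zero hab hba m

set_option maxHeartbeats 1600000 in
/-- Let `S₁ = E₁₂`, `S₂ = E₂₁` be the elementary `2 × 2` matrices. Suppose `M₁, M₂` are
normal operators on a Hilbert space `K`, `V : ℂ² → K` is an isometry with `V*M_iV = S_i`,
`M₁M₂ = 0 = M₂M₁`, `M₁M₂* = 0 = M₁*M₂`, and `‖M_i‖ ≤ r` for both `i`. Then `r ≥ 2`. -/
theorem dilation_scale_two_le {K : Type*} [NormedAddCommGroup K]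
    [InnerProductSpace ℂ K] [CompleteSpace K]
    (M₁ M₂ : K →L[ℂ] K) (hM₁ : IsStarNormal M₁) (hM₂ : IsStarNormal M₂)
    (V : EuclideanSpace ℂ (Fin 2) →L[ℂ] K) (hV : ∀ x, ‖V x‖ = ‖x‖)
    (hc₁ : ContinuousLinearMap.adjoint V ∘L M₁ ∘L V
      = Matrix.toEuclideanCLM (𝕜 := ℂ) (n := Fin 2) (Matrix.single 0 1 1))
    (hc₂ : ContinuousLinearMap.adjoint V ∘L M₂ ∘L V
      = Matrix.toEuclideanCLM (𝕜 := ℂ) (n := Fin 2) (Matrix.single 1 0 1))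
    (h₁ : M₁ * M₂ = 0) (h₂ : M₂ * M₁ = 0)
    (h₃ : M₁ * star M₂ = 0) (h₄ : star M₁ * M₂ = 0)
    (r : ℝ) (hr₁ : ‖M₁‖ ≤ r) (hr₂ : ‖M₂‖ ≤ r) :
    2 ≤ r := by
  have hr0 : 0 ≤ r := le_trans (norm_nonneg _) hr₁
  set T : K →L[ℂ] K := M₁ + star M₂ with hT
  -- the compression of `star M₂` is `E₁₂`
  have hE : star (Matrix.single (1 : Fin 2) (0 : Fin 2) (1 : ℂ))
      = Matrix.single 0 1 1 := by
    ext i j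
    fin_cases i <;> fin_cases j <;>
      simp [Matrix.star_apply, Matrix.single, Matrix.of_apply]
  have hadj : ContinuousLinearMap.adjoint
        (Matrix.toEuclideanCLM (𝕜 := ℂ) (n := Fin 2) (Matrix.single 1 0 1))
      = Matrix.toEuclideanCLM (𝕜 := ℂ) (n := Fin 2) (Matrix.single 0 1 1) := by
    rw [← star_eq_adjoint, ← map_star, hE]
  have hstar : ContinuousLinearMap.adjoint V ∘L star M₂ ∘L V
      = Matrix.toEuclideanCLM (𝕜 := ℂ) (n := Fin 2) (Matrix.single 0 1 1) := by
    have h := congrArg (fun A => ContinuousLinearMap.adjoint A) hc₂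
    simp only [adjoint_comp, adjoint_adjoint] at h
    rw [hadj] at h
    rw [star_eq_adjoint, ← h]
    ext x
    rfl
  have hcT : ContinuousLinearMap.adjoint V ∘L T ∘L V
      = Matrix.toEuclideanCLM (𝕜 := ℂ) (n := Fin 2) (Matrix.single 0 1 1)
        + Matrix.toEuclideanCLM (𝕜 := ℂ) (n := Fin 2) (Matrix.single 0 1 1) := by
    rw [hT, add_comp, comp_add, hc₁, hstar]
  -- lower bound : 2 ≤ ‖T‖
  have hval : Matrix.toEuclideanCLM (𝕜 := ℂ) (n := Fin 2) (Matrix.single 0 1 1)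
      (EuclideanSpace.single 1 1) = EuclideanSpace.single 0 1 := by
    apply WithLp.ofLp_injective
    rw [Matrix.ofLp_toEuclideanCLM]
    ext i
    fin_cases i <;> simp [Matrix.mulVec, Matrix.single, Fin.sum_univ_two]
  have hx1 : ‖(EuclideanSpace.single 1 1 : EuclideanSpace ℂ (Fin 2))‖ = 1 := by
    simp [EuclideanSpace.norm_single]
  have hval2 : ‖(ContinuousLinearMap.adjoint V ∘L T ∘L V)
      (EuclideanSpace.single 1 1)‖ = 2 := by
    rw [hcT]
    simp only [add_apply, hval]
    rw [← two_smul ℂ, norm_smul]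
    simp [EuclideanSpace.norm_single]
  have hVadj : ‖ContinuousLinearMap.adjoint V‖ ≤ 1 := by
    have : ‖V‖ ≤ 1 := opNorm_le_bound _ zero_le_one (fun x => by rw [hV x, one_mul])
    calc ‖ContinuousLinearMap.adjoint V‖ = ‖V‖ :=
          LinearIsometryEquiv.norm_map (ContinuousLinearMap.adjoint) V
      _ ≤ 1 := this
  have hTlow : 2 ≤ ‖T‖ := by
    rw [← hval2]
    show ‖ContinuousLinearMap.adjoint V (T (V (EuclideanSpace.single 1 1)))‖ ≤ ‖T‖
    calc ‖ContinuousLinearMap.adjoint V (T (V (EuclideanSpace.single 1 1)))‖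
        ≤ ‖ContinuousLinearMap.adjoint V‖ * ‖T (V (EuclideanSpace.single 1 1))‖ :=
          le_opNorm _ _
      _ ≤ 1 * (‖T‖ * ‖V (EuclideanSpace.single 1 1)‖) :=
          mul_le_mul hVadj (le_opNorm _ _) (norm_nonneg _) zero_le_one
      _ = ‖T‖ := by rw [hV, hx1, one_mul, mul_one]
  -- algebraic identities
  have e1 : star M₁ * star M₂ = 0 := by rw [← star_mul, h₂, star_zero]
  have e2 : star M₂ * star M₁ = 0 := by rw [← star_mul, h₁, star_zero]
  have hTT : star T * T = star M₁ * M₁ + M₂ * star M₂ := by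
    rw [hT, star_add, star_star, add_mul, mul_add, mul_add, e1, h₂]
    abel
  have hAB : (star M₁ * M₁) * (M₂ * star M₂) = 0 := by
    rw [mul_assoc, ← mul_assoc M₁, h₁, zero_mul, mul_zero]
  have hBA : (M₂ * star M₂) * (star M₁ * M₁) = 0 := by
    rw [mul_assoc, ← mul_assoc (star M₂), e2, zero_mul, mul_zero]
  have nA : ‖star M₁ * M₁‖ ≤ r ^ 2 := by
    calc ‖star M₁ * M₁‖ ≤ ‖star M₁‖ * ‖M₁‖ := norm_mul_le _ _
      _ = ‖M₁‖ * ‖M₁‖ := by rw [norm_star]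
      _ ≤ r * r := mul_le_mul hr₁ hr₁ (norm_nonneg _) hr0
      _ = r ^ 2 := (sq r).symm
  have nB : ‖M₂ * star M₂‖ ≤ r ^ 2 := by
    calc ‖M₂ * star M₂‖ ≤ ‖M₂‖ * ‖star M₂‖ := norm_mul_le _ _
      _ = ‖M₂‖ * ‖M₂‖ := by rw [norm_star]
      _ ≤ r * r := mul_le_mul hr₂ hr₂ (norm_nonneg _) hr0
      _ = r ^ 2 := (sq r).symm
  have hc4 : 4 ≤ ‖star T * T‖ := by
    rw [CStarRing.norm_star_mul_self]
    nlinarith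
  have hsa : IsSelfAdjoint (star T * T) := IsSelfAdjoint.star_mul_self T
  have key : ∀ n : ℕ, (4 : ℝ) ^ (2 ^ n) ≤ 2 * (r ^ 2) ^ (2 ^ n) := by
    intro n
    have hnpos : 0 < 2 ^ n := Nat.pow_pos (by norm_num)
    have hpow : ‖(star T * T) ^ (2 ^ n)‖ = ‖star T * T‖ ^ (2 ^ n) := by
      have h := hsa.nnnorm_pow_two_pow n
      rw [← coe_nnnorm, ← coe_nnnorm ((star T * T))]
      exact_mod_cast h
    calc (4 : ℝ) ^ (2 ^ n) ≤ ‖star T * T‖ ^ (2 ^ n) :=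
          pow_le_pow_left₀ (by norm_num) hc4 _
      _ = ‖(star T * T) ^ (2 ^ n)‖ := hpow.symm
      _ = ‖(star M₁ * M₁) ^ (2 ^ n) + (M₂ * star M₂) ^ (2 ^ n)‖ := by
          rw [hTT, add_pow_of_mul_eq_zero hAB hBA hnpos]
      _ ≤ ‖(star M₁ * M₁) ^ (2 ^ n)‖ + ‖(M₂ * star M₂) ^ (2 ^ n)‖ := norm_add_le _ _
      _ ≤ ‖star M₁ * M₁‖ ^ (2 ^ n) + ‖M₂ * star M₂‖ ^ (2 ^ n) :=
          add_le_add (norm_pow_le' _ hnpos) (norm_pow_le' _ hnpos)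
      _ ≤ (r ^ 2) ^ (2 ^ n) + (r ^ 2) ^ (2 ^ n) :=
          add_le_add (pow_le_pow_left₀ (norm_nonneg _) nA _)
            (pow_le_pow_left₀ (norm_nonneg _) nB _)
      _ = 2 * (r ^ 2) ^ (2 ^ n) := by ring
  -- conclude
  by_contra hcon
  push_neg at hcon
  have hq1 : r ^ 2 / 4 < 1 := by nlinarith
  have hq0 : 0 ≤ r ^ 2 / 4 := by positivity
  obtain ⟨n, hn⟩ := exists_pow_lt_of_lt_one (by norm_num : (0:ℝ) < 1/2) hq1
  have hle : (r ^ 2 / 4) ^ (2 ^ n) ≤ (r ^ 2 / 4) ^ n :=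
    pow_le_pow_of_le_one hq0 (le_of_lt hq1) (le_of_lt (Nat.lt_two_pow_self (n := n)))
  have hkey := key n
  have h4pos : (0:ℝ) < 4 ^ (2 ^ n) := by positivity
  have hexp : (r ^ 2) ^ (2 ^ n) = 4 ^ (2 ^ n) * (r ^ 2 / 4) ^ (2 ^ n) := by
    rw [← mul_pow]; ring_nf
  rw [hexp] at hkey
  have : (1:ℝ) ≤ 2 * (r ^ 2 / 4) ^ (2 ^ n) := by
    nlinarith [hkey, h4pos]
  nlinarith [hle, hn, this]
end

section
/- Let A₁, …, A_d be pairwise anticommuting self-adjoint operators on a Hilbert space H with ‖A_j‖ ≤ a_j for positive reals a_j. Then there exist pairwise anticommuting self-adjoint operators M₁, …, M_d on H ⊗ ℂ^{2^d} with M_j² = a_j² I, such that each M_j dilates A_j (i.e. V*M_jV = A_j for a common isometry V : H → H ⊗ ℂ^{2^d}). -/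
open ContinuousLinearMap

/-- The canonical uniform equivalence between `PiLp 2` and the product, used to supply the
(missing) completeness instance on finite `ℓ²` direct sums. -/
noncomputable def piLpUniformEquiv {H : Type*} [NormedAddCommGroup H] {m : ℕ} :
    PiLp 2 (fun _ : Fin m => H) ≃ᵤ (Fin m → H) where
  toEquiv := WithLp.equiv 2 _
  uniformContinuous_toFun := by exact PiLp.uniformContinuous_ofLp ..
  uniformContinuous_invFun := by exact PiLp.uniformContinuous_toLp ..

instance piLp_completeSpace {H : Type*} [NormedAddCommGroup H] [CompleteSpace H] {m : ℕ} :
    CompleteSpace (PiLp 2 (fun _ : Fin m => H)) :=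
  (piLpUniformEquiv (H := H) (m := m)).completeSpace_iff.mpr inferInstance

set_option linter.unusedSectionVars false

noncomputable section Aux

/-! ### Commutation with the continuous functional calculus -/

section CommuteCfc
variable {𝔄 : Type*} [Ring 𝔄] [StarRing 𝔄] [TopologicalSpace 𝔄] [IsTopologicalRing 𝔄]
  [Algebra ℝ 𝔄] [T2Space 𝔄] [ContinuousFunctionalCalculus ℝ 𝔄 (IsSelfAdjoint : 𝔄 → Prop)]

open Topology in
lemma commute_cfcHom' {x T : 𝔄} [CompactSpace (spectrum ℝ x)] (hx : IsSelfAdjoint x)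
    (hTx : Commute T x) (f : C(spectrum ℝ x, ℝ)) : Commute T (cfcHom hx f) := by
  have hc : Continuous (cfcHom hx (R := ℝ)) := cfcHom_continuous hx
  have hclosed : IsClosed {g : C(spectrum ℝ x, ℝ) | Commute T (cfcHom hx g)} := by
    have : {g : C(spectrum ℝ x, ℝ) | Commute T (cfcHom hx g)} =
        (fun g => T * cfcHom hx g - cfcHom hx g * T) ⁻¹' {0} := by
      ext g; simp [Commute, SemiconjBy, sub_eq_zero]
    rw [this]
    exact IsClosed.preimage (by fun_prop) isClosed_singleton
  induction f using ContinuousMap.induction_on_of_compact with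
  | const r =>
    have : (ContinuousMap.const (spectrum ℝ x) r) = algebraMap ℝ C(spectrum ℝ x, ℝ) r := rfl
    rw [this, AlgHomClass.commutes]
    exact Algebra.commute_algebraMap_right r T
  | id => rwa [cfcHom_id hx]
  | star_id => rw [map_star, cfcHom_id hx]; simpa [hx.star_eq] using hTx
  | add f g hf hg => rw [map_add]; exact hf.add_right hg
  | mul f g hf hg => rw [map_mul]; exact hf.mul_right hg
  | frequently f hf =>
    have : f ∈ closure {g : C(spectrum ℝ x, ℝ) | Commute T (cfcHom hx g)} :=
      mem_closure_iff_frequently.mpr hf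
    rwa [hclosed.closure_eq] at this

lemma commute_cfc' {x T : 𝔄} [CompactSpace (spectrum ℝ x)] (hx : IsSelfAdjoint x)
    (hTx : Commute T x) (f : ℝ → ℝ) : Commute T (cfc f x) := by
  refine cfc_cases (fun y => Commute T y) x f (Commute.zero_right T) fun hf h ↦ ?_
  exact commute_cfcHom' hx hTx _
end CommuteCfc

/-! ### The defect operator -/

variable {K : Type*} [NormedAddCommGroup K] [InnerProductSpace ℂ K] [CompleteSpace K]

lemma real_coe_smul_one (r : ℝ) : ((r : ℂ)) • (1 : K →L[ℂ] K) = algebraMap ℝ _ r := by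
  rw [Algebra.algebraMap_eq_smul_one]
  ext x
  rw [ContinuousLinearMap.smul_apply, ContinuousLinearMap.smul_apply, ContinuousLinearMap.one_apply]
  exact (RCLike.real_smul_eq_coe_smul (K := ℂ) r x).symm

lemma algebraMap_nonneg' (r : ℝ) (hr : 0 ≤ r) : (0 : K →L[ℂ] K) ≤ algebraMap ℝ _ r := by
  rw [Algebra.algebraMap_eq_smul_one]
  have : r • (1 : K →L[ℂ] K) = star (Real.sqrt r • 1) * (Real.sqrt r • 1) := by
    rw [star_smul, star_trivial, star_one, smul_mul_smul_comm, one_mul, Real.mul_self_sqrt hr]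
  rw [this]
  exact star_mul_self_nonneg _

lemma exists_defect (A : K →L[ℂ] K) (a : ℝ) (ha : 0 ≤ a) (hA : ‖A‖ ≤ a)
    (hsa : IsSelfAdjoint A) :
    ∃ D : K →L[ℂ] K, IsSelfAdjoint D ∧ D * D = algebraMap ℝ _ (a ^ 2) - A * A ∧
      A * D = D * A ∧ ∀ T, T * A = -(A * T) → T * D = D * T := by
  set Δ : K →L[ℂ] K := algebraMap ℝ _ (a ^ 2) - A * A with hΔ
  have hAA : IsSelfAdjoint (A * A) := by rw [IsSelfAdjoint, star_mul, hsa.star_eq]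
  have hΔsa : IsSelfAdjoint Δ := by
    exact (IsSelfAdjoint.algebraMap _ (.all (a ^ 2))).sub hAA
  have hΔ0 : (0 : K →L[ℂ] K) ≤ Δ := by
    have h1 : A * A ≤ algebraMap ℝ _ ‖A * A‖ := hAA.le_algebraMap_norm_self
    have h2 : ‖A * A‖ ≤ a ^ 2 := by
      calc ‖A * A‖ ≤ ‖A‖ * ‖A‖ := norm_mul_le A A
      _ ≤ a ^ 2 := by nlinarith [norm_nonneg A]
    have h3 : algebraMap ℝ (K →L[ℂ] K) ‖A * A‖ ≤ algebraMap ℝ _ (a ^ 2) := by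
      rw [← sub_nonneg, ← map_sub]
      exact algebraMap_nonneg' _ (by linarith)
    rw [sub_nonneg]
    exact h1.trans h3
  refine ⟨cfc Real.sqrt Δ, cfc_predicate Real.sqrt Δ, ?_, ?_, ?_⟩
  · rw [← cfc_mul Real.sqrt Real.sqrt Δ]
    rw [cfc_congr (g := fun t : ℝ => t)
      fun t ht => Real.mul_self_sqrt (spectrum_nonneg_of_nonneg hΔ0 ht)]
    exact cfc_id' ℝ Δ
  · have : Commute A Δ := by
      have : Commute A (A * A) := (Commute.refl A).mul_right (Commute.refl A)
      exact (Algebra.commute_algebraMap_right _ _).sub_right this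
    exact (commute_cfc' hΔsa this Real.sqrt).eq
  · intro T hT
    have hTΔ : Commute T Δ := by
      refine (Algebra.commute_algebraMap_right _ _).sub_right ?_
      show T * (A * A) = A * A * T
      have h1 : T * A = -(A * T) := hT
      calc T * (A * A) = (T * A) * A := by rw [mul_assoc]
      _ = -(A * T) * A := by rw [h1]
      _ = -(A * (T * A)) := by rw [neg_mul, mul_assoc]
      _ = -(A * -(A * T)) := by rw [h1]
      _ = A * A * T := by rw [mul_neg, neg_neg, ← mul_assoc]
    exact (commute_cfc' hΔsa hTΔ Real.sqrt).eq

/-! ### 2×2 block operators on the two-fold ℓ² direct sum -/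

local notation "K2" => PiLp 2 (fun _ : Fin 2 => K)

def pr (i : Fin 2) : K2 →L[ℂ] K :=
  (ContinuousLinearMap.proj i).comp
    ((PiLp.continuousLinearEquiv 2 ℂ (fun _ : Fin 2 => K) : K2 ≃L[ℂ] (Fin 2 → K)) :
      K2 →L[ℂ] (Fin 2 → K))

def inj (i : Fin 2) : K →L[ℂ] K2 :=
  (((PiLp.continuousLinearEquiv 2 ℂ (fun _ : Fin 2 => K)).symm : (Fin 2 → K) ≃L[ℂ] K2) :
      (Fin 2 → K) →L[ℂ] K2).comp
    (ContinuousLinearMap.pi (Pi.single i (ContinuousLinearMap.id ℂ K)))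

@[simp] lemma pr_apply (i : Fin 2) (x : K2) : pr i x = x i := rfl

@[simp] lemma inj_apply_same (i : Fin 2) (v : K) : (inj i v) i = v := by
  simp [inj, ContinuousLinearMap.pi]

lemma inj_apply (i j : Fin 2) (v : K) : (inj i v) j = if j = i then v else 0 := by
  rcases eq_or_ne j i with h | h
  · subst h; simp
  · simp [inj, h]

def twoBlock (P Q R S : K →L[ℂ] K) : K2 →L[ℂ] K2 :=
  inj 0 ∘L (P ∘L pr 0 + Q ∘L pr 1) + inj 1 ∘L (R ∘L pr 0 + S ∘L pr 1)

lemma twoBlock_apply_zero (P Q R S : K →L[ℂ] K) (x : K2) :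
    (twoBlock P Q R S x) 0 = P (x 0) + Q (x 1) := by
  simp [twoBlock, inj_apply]

lemma twoBlock_apply_one (P Q R S : K →L[ℂ] K) (x : K2) :
    (twoBlock P Q R S x) 1 = R (x 0) + S (x 1) := by
  simp [twoBlock, inj_apply]

lemma twoBlock_mul (P Q R S P' Q' R' S' : K →L[ℂ] K) :
    twoBlock P Q R S * twoBlock P' Q' R' S' =
      twoBlock (P * P' + Q * R') (P * Q' + Q * S') (R * P' + S * R') (R * Q' + S * S') := by
  ext x i
  fin_cases i <;>
    simp [ContinuousLinearMap.mul_apply, twoBlock_apply_zero, twoBlock_apply_one] <;> abel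

lemma twoBlock_neg (P Q R S : K →L[ℂ] K) :
    -(twoBlock P Q R S) = twoBlock (-P) (-Q) (-R) (-S) := by
  ext x i
  fin_cases i <;> simp [twoBlock_apply_zero, twoBlock_apply_one] <;> abel

lemma twoBlock_smul_one (c : ℂ) :
    (c • 1 : K2 →L[ℂ] K2) = twoBlock (c • 1) 0 0 (c • 1) := by
  ext x i
  fin_cases i <;> simp [twoBlock_apply_zero, twoBlock_apply_one]

lemma twoBlock_adjoint (P Q R S : K →L[ℂ] K) :
    adjoint (twoBlock P Q R S) = twoBlock (adjoint P) (adjoint R) (adjoint Q) (adjoint S) := by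
  symm
  rw [ContinuousLinearMap.eq_adjoint_iff]
  intro x y
  simp only [PiLp.inner_apply, Fin.sum_univ_two, twoBlock_apply_zero, twoBlock_apply_one,
    inner_add_left, inner_add_right, ContinuousLinearMap.adjoint_inner_left]
  ring

lemma inj0_norm (x : K) : ‖(inj 0 x : K2)‖ = ‖x‖ := by
  rw [PiLp.norm_eq_of_L2]
  simp [Fin.sum_univ_two, inj_apply, Real.sqrt_sq]

lemma adjoint_inj0 : adjoint (inj 0 : K →L[ℂ] K2) = pr 0 := by
  symm
  rw [ContinuousLinearMap.eq_adjoint_iff]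
  intro x y
  simp [PiLp.inner_apply, Fin.sum_univ_two, inj_apply]

lemma corner (P Q R S : K →L[ℂ] K) :
    adjoint (inj 0 : K →L[ℂ] K2) ∘L twoBlock P Q R S ∘L inj 0 = P := by
  ext x
  simp [adjoint_inj0, twoBlock_apply_zero, inj_apply]

lemma dsign_norm_le (T : K →L[ℂ] K) : ‖twoBlock T 0 0 (-T)‖ ≤ ‖T‖ := by
  refine ContinuousLinearMap.opNorm_le_bound _ (norm_nonneg T) fun x => ?_
  rw [PiLp.norm_eq_of_L2, PiLp.norm_eq_of_L2]
  simp only [Fin.sum_univ_two, twoBlock_apply_zero, twoBlock_apply_one,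
    ContinuousLinearMap.zero_apply, add_zero, zero_add, ContinuousLinearMap.neg_apply,
    norm_neg]
  rw [show ‖T‖ * Real.sqrt (‖x 0‖ ^ 2 + ‖x 1‖ ^ 2)
      = Real.sqrt (‖T‖ ^ 2 * (‖x 0‖ ^ 2 + ‖x 1‖ ^ 2)) by
    rw [Real.sqrt_mul (sq_nonneg _), Real.sqrt_sq (norm_nonneg _)]]
  apply Real.sqrt_le_sqrt
  have h0 := (T.le_opNorm (x 0))
  have h1 := (T.le_opNorm (x 1))
  nlinarith [norm_nonneg (T (x 0)), norm_nonneg (T (x 1)), norm_nonneg (x 0), norm_nonneg (x 1)]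

/-! ### Derived block lemmas -/

lemma anticomm_symm {X Y : K →L[ℂ] K} (h : X * Y = -(Y * X)) : Y * X = -(X * Y) := by
  rw [h, neg_neg]

lemma dsign_mul_dsign (S T : K →L[ℂ] K) :
    twoBlock S 0 0 (-S) * twoBlock T 0 0 (-T) = twoBlock (S * T) 0 0 (S * T) := by
  rw [twoBlock_mul]; simp

lemma neg_dsign' (X : K →L[ℂ] K) :
    -(twoBlock X 0 0 X) = twoBlock (-X) 0 0 (-X) := by
  rw [twoBlock_neg, neg_zero]

lemma dsign_anticomm {S T : K →L[ℂ] K} (h : S * T = -(T * S)) :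
    twoBlock S 0 0 (-S) * twoBlock T 0 0 (-T)
      = -(twoBlock T 0 0 (-T) * twoBlock S 0 0 (-S)) := by
  rw [dsign_mul_dsign, dsign_mul_dsign, h, neg_dsign']

lemma dsign_sa {T : K →L[ℂ] K} (h : IsSelfAdjoint T) :
    IsSelfAdjoint (twoBlock T 0 0 (-T)) := by
  rw [isSelfAdjoint_iff', twoBlock_adjoint, map_neg,
    map_zero, h.adjoint_eq]

lemma dsign_sq {T : K →L[ℂ] K} {c : ℂ} (h : T * T = c • 1) :
    twoBlock T 0 0 (-T) * twoBlock T 0 0 (-T) = c • 1 := by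
  rw [dsign_mul_dsign, h, twoBlock_smul_one]

lemma halmos_sa {A D : K →L[ℂ] K} (hA : IsSelfAdjoint A) (hD : IsSelfAdjoint D) :
    IsSelfAdjoint (twoBlock A D D (-A)) := by
  rw [isSelfAdjoint_iff', twoBlock_adjoint, map_neg,
    hA.adjoint_eq, hD.adjoint_eq]

lemma halmos_dsign_anticomm {A D T : K →L[ℂ] K} (hAT : T * A = -(A * T))
    (hTD : T * D = D * T) :
    twoBlock A D D (-A) * twoBlock T 0 0 (-T)
      = -(twoBlock T 0 0 (-T) * twoBlock A D D (-A)) := by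
  rw [twoBlock_mul, twoBlock_mul, twoBlock_neg]
  simp [hAT, hTD]

lemma halmos_sq {A D : K →L[ℂ] K} {r : ℝ} (hAD : A * D = D * A)
    (hDD : D * D = algebraMap ℝ _ r - A * A) :
    twoBlock A D D (-A) * twoBlock A D D (-A) = ((r : ℂ)) • 1 := by
  rw [twoBlock_mul, twoBlock_smul_one, real_coe_smul_one]
  congr 1
  · rw [hDD]; abel
  · rw [mul_neg, hAD]; abel
  · rw [neg_mul, hAD]; abel
  · rw [neg_mul, mul_neg, neg_neg, hDD]; abel


section Transport

variable {K : Type*} [NormedAddCommGroup K] [InnerProductSpace ℂ K]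

/-- Flattening of an iterated `ℓ²` direct sum. -/
def flattenLIE (m n l : ℕ) (h : m * n = l) :
    PiLp 2 (fun _ : Fin m => PiLp 2 (fun _ : Fin n => K)) ≃ₗᵢ[ℂ] PiLp 2 (fun _ : Fin l => K) := by
  refine ⟨(WithLp.linearEquiv 2 ℂ _) ≪≫ₗ
    (LinearEquiv.piCongrRight (fun _ : Fin m => WithLp.linearEquiv 2 ℂ _)) ≪≫ₗ
    (LinearEquiv.curry ℂ K (Fin m) (Fin n)).symm ≪≫ₗ
    (LinearEquiv.funCongrLeft ℂ K ((finProdFinEquiv.trans (finCongr h)).symm)) ≪≫ₗ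
    (WithLp.linearEquiv 2 ℂ _).symm, fun x => ?_⟩
  rw [PiLp.norm_eq_of_L2, PiLp.norm_eq_of_L2]
  congr 1
  simp_rw [PiLp.norm_sq_eq_of_L2]
  rw [show (∑ i : Fin m, ∑ j : Fin n, ‖x i j‖ ^ 2)
      = ∑ p : Fin m × Fin n, ‖x p.1 p.2‖ ^ 2 by rw [Fintype.sum_prod_type],
    ← Equiv.sum_comp (finProdFinEquiv.trans (finCongr h)).symm
      (fun p : Fin m × Fin n => ‖x p.1 p.2‖ ^ 2)]
  rfl

def singleLIE : K ≃ₗᵢ[ℂ] PiLp 2 (fun _ : Fin 1 => K) := by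
  refine ⟨(LinearEquiv.funUnique (Fin 1) ℂ K).symm ≪≫ₗ (WithLp.linearEquiv 2 ℂ _).symm,
    fun x => ?_⟩
  rw [PiLp.norm_eq_of_L2]
  simp [Real.sqrt_sq]

variable {E F G : Type*} [NormedAddCommGroup E] [InnerProductSpace ℂ E]
  [NormedAddCommGroup F] [InnerProductSpace ℂ F] [NormedAddCommGroup G] [InnerProductSpace ℂ G]

/-- The continuous linear map underlying a linear isometry equivalence. -/
def eCLM (e : E ≃ₗᵢ[ℂ] F) : E →L[ℂ] F := (e.toContinuousLinearEquiv : E →L[ℂ] F)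

@[simp] lemma eCLM_apply (e : E ≃ₗᵢ[ℂ] F) (x : E) : eCLM e x = e x := rfl

/-- Conjugation of an operator by a linear isometry equivalence. -/
def conjOp (e : E ≃ₗᵢ[ℂ] F) (T : E →L[ℂ] E) : F →L[ℂ] F :=
  eCLM e ∘L T ∘L eCLM e.symm

@[simp] lemma conjOp_apply (e : E ≃ₗᵢ[ℂ] F) (T : E →L[ℂ] E) (x : F) :
    conjOp e T x = e (T (e.symm x)) := rfl

lemma conjOp_mul (e : E ≃ₗᵢ[ℂ] F) (S T : E →L[ℂ] E) :
    conjOp e S * conjOp e T = conjOp e (S * T) := by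
  ext x
  simp [ContinuousLinearMap.mul_apply]

lemma conjOp_neg (e : E ≃ₗᵢ[ℂ] F) (T : E →L[ℂ] E) : conjOp e (-T) = -(conjOp e T) := by
  ext x; simp

lemma conjOp_smul_one (e : E ≃ₗᵢ[ℂ] F) (c : ℂ) : conjOp e (c • 1) = c • 1 := by
  ext x; simp

variable [CompleteSpace E] [CompleteSpace F] [CompleteSpace G]

lemma adjoint_eCLM (e : E ≃ₗᵢ[ℂ] F) : adjoint (eCLM e) = eCLM e.symm := by
  symm
  rw [ContinuousLinearMap.eq_adjoint_iff]
  intro x y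
  rw [eCLM_apply, eCLM_apply, ← e.inner_map_map (e.symm x) y, e.apply_symm_apply]

lemma adjoint_conjOp (e : E ≃ₗᵢ[ℂ] F) (T : E →L[ℂ] E) :
    adjoint (conjOp e T) = conjOp e (adjoint T) := by
  rw [conjOp, conjOp, ContinuousLinearMap.adjoint_comp, ContinuousLinearMap.adjoint_comp,
    adjoint_eCLM, adjoint_eCLM, e.symm_symm]
  ext x; simp

lemma isSelfAdjoint_conjOp (e : E ≃ₗᵢ[ℂ] F) {T : E →L[ℂ] E} (hT : IsSelfAdjoint T) :
    IsSelfAdjoint (conjOp e T) := by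
  rw [isSelfAdjoint_iff'] at hT ⊢
  rw [← ContinuousLinearMap.star_eq_adjoint] at *
  rw [show star (conjOp e T) = adjoint (conjOp e T) from rfl, adjoint_conjOp]
  rw [show star T = adjoint T from rfl] at hT
  rw [hT]

lemma conjOp_dilate (e : E ≃ₗᵢ[ℂ] F) (W : G →L[ℂ] E) (T : E →L[ℂ] E) :
    adjoint (eCLM e ∘L W) ∘L conjOp e T ∘L (eCLM e ∘L W) = adjoint W ∘L T ∘L W := by
  ext x
  simp [ContinuousLinearMap.adjoint_comp, adjoint_eCLM]

end Transport

/-! ### The main inductive dilation construction -/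

universe u

theorem dilation_aux : ∀ (d : ℕ) (K : Type u) [NormedAddCommGroup K] [InnerProductSpace ℂ K]
    [CompleteSpace K] (A : Fin d → (K →L[ℂ] K)) (a : Fin d → ℝ)
    (k : ℕ) (C : Fin k → (K →L[ℂ] K)) (γ : Fin k → ℝ),
    (∀ j, IsSelfAdjoint (A j)) → (∀ i j, i ≠ j → A i * A j = -(A j * A i)) →
    (∀ j, ‖A j‖ ≤ a j) → (∀ j, 0 ≤ a j) →
    (∀ i, IsSelfAdjoint (C i)) → (∀ i i', i ≠ i' → C i * C i' = -(C i' * C i)) →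
    (∀ i j, C i * A j = -(A j * C i)) → (∀ i, C i * C i = ((γ i : ℂ)) • 1) →
    ∃ (V : K →L[ℂ] PiLp 2 (fun _ : Fin (2 ^ d) => K))
      (M : Fin d → (PiLp 2 (fun _ : Fin (2 ^ d) => K) →L[ℂ] PiLp 2 (fun _ : Fin (2 ^ d) => K)))
      (C' : Fin k → (PiLp 2 (fun _ : Fin (2 ^ d) => K) →L[ℂ] PiLp 2 (fun _ : Fin (2 ^ d) => K))),
      (∀ x, ‖V x‖ = ‖x‖) ∧ (∀ j, IsSelfAdjoint (M j)) ∧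
      (∀ i j, i ≠ j → M i * M j = -(M j * M i)) ∧
      (∀ j, M j * M j = ((a j ^ 2 : ℝ) : ℂ) • 1) ∧
      (∀ j, adjoint V ∘L M j ∘L V = A j) ∧
      (∀ i, IsSelfAdjoint (C' i)) ∧ (∀ i i', i ≠ i' → C' i * C' i' = -(C' i' * C' i)) ∧
      (∀ i j, C' i * M j = -(M j * C' i)) ∧
      (∀ i, C' i * C' i = ((γ i : ℂ)) • 1) ∧
      (∀ i, adjoint V ∘L C' i ∘L V = C i) := by
  intro d
  induction d with
  | zero =>
    intro K _ _ _ A a k C γ hsa hac hnorm ha hCsa hCC hCA hCsq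
    refine ⟨eCLM (singleLIE (K := K)), fun j => j.elim0, fun i => conjOp singleLIE (C i),
      fun x => (singleLIE (K := K)).norm_map x, fun j => j.elim0, fun i j _ => i.elim0,
      fun j => j.elim0, fun j => j.elim0,
      fun i => isSelfAdjoint_conjOp _ (hCsa i),
      fun i i' h => by rw [conjOp_mul, conjOp_mul, hCC i i' h, conjOp_neg],
      fun i j => j.elim0,
      fun i => by rw [conjOp_mul, hCsq i, conjOp_smul_one],
      fun i => by ext x; simp [adjoint_eCLM]⟩
  | succ d ih =>
    intro K _ _ _ A a k C γ hsa hac hnorm ha hCsa hCC hCA hCsq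
    obtain ⟨D, hDsa, hDD, hAD, hDcomm⟩ := exists_defect (A 0) (a 0) (ha 0) (hnorm 0) (hsa 0)
    set M0 : PiLp 2 (fun _ : Fin 2 => K) →L[ℂ] PiLp 2 (fun _ : Fin 2 => K) :=
      twoBlock (A 0) D D (-(A 0)) with hM0
    set B : Fin d → (PiLp 2 (fun _ : Fin 2 => K) →L[ℂ] PiLp 2 (fun _ : Fin 2 => K)) :=
      fun j => twoBlock (A j.succ) 0 0 (-(A j.succ)) with hB
    set Cc : Fin (k + 1) → (PiLp 2 (fun _ : Fin 2 => K) →L[ℂ] PiLp 2 (fun _ : Fin 2 => K)) :=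
      Fin.cons M0 (fun i => twoBlock (C i) 0 0 (-(C i))) with hCc
    set γ' : Fin (k + 1) → ℝ := Fin.cons (a 0 ^ 2) γ with hγ'
    -- hypotheses for the inductive call
    have hM0B : ∀ j : Fin d, M0 * B j = -(B j * M0) := fun j =>
      halmos_dsign_anticomm (hac j.succ 0 (Fin.succ_ne_zero j))
        (hDcomm _ (hac j.succ 0 (Fin.succ_ne_zero j)))
    have hCB : ∀ (i : Fin k) (j : Fin d),
        twoBlock (C i) 0 0 (-(C i)) * B j = -(B j * twoBlock (C i) 0 0 (-(C i))) := fun i j =>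
      dsign_anticomm (hCA i j.succ)
    have hM0C : ∀ i : Fin k, M0 * twoBlock (C i) 0 0 (-(C i))
        = -(twoBlock (C i) 0 0 (-(C i)) * M0) := fun i =>
      halmos_dsign_anticomm (hCA i 0) (hDcomm _ (hCA i 0))
    obtain ⟨W, N, C'', hW, hNsa, hNN, hNsq, hNdil, hC''sa, hC''C'', hC''N, hC''sq, hC''dil⟩ :=
      ih (PiLp 2 (fun _ : Fin 2 => K)) B (fun j => a j.succ) (k + 1) Cc γ'
        (fun j => dsign_sa (hsa j.succ))
        (fun i j h => dsign_anticomm (hac i.succ j.succ (fun hh => h (Fin.succ_injective _ hh))))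
        (fun j => le_trans (dsign_norm_le _) (hnorm j.succ))
        (fun j => ha j.succ)
        (by
          refine Fin.cases ?_ ?_
          · exact halmos_sa (hsa 0) hDsa
          · exact fun i => dsign_sa (hCsa i))
        (by
          refine Fin.cases ?_ ?_
          · refine Fin.cases ?_ ?_
            · intro h; exact absurd rfl h
            · intro i _
              simp only [hCc, Fin.cons_zero, Fin.cons_succ]
              exact hM0C i
          · intro i
            refine Fin.cases ?_ ?_
            · intro _
              simp only [hCc, Fin.cons_zero, Fin.cons_succ]
              exact anticomm_symm (hM0C i)
            · intro i' h
              simp only [hCc, Fin.cons_succ]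
              exact dsign_anticomm (hCC i i' (fun hh => h (congrArg Fin.succ hh))))
        (by
          refine Fin.cases ?_ ?_
          · intro j
            simp only [hCc, Fin.cons_zero]
            exact hM0B j
          · intro i j
            simp only [hCc, Fin.cons_succ]
            exact hCB i j)
        (by
          refine Fin.cases ?_ ?_
          · simp only [hCc, hγ', Fin.cons_zero]
            exact halmos_sq hAD hDD
          · intro i
            simp only [hCc, hγ', Fin.cons_succ]
            exact dsign_sq (hCsq i))
    -- flatten and transport
    set e := flattenLIE (K := K) (2 ^ d) 2 (2 ^ (d + 1)) (by rw [pow_succ]) with he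
    refine ⟨eCLM e ∘L (W ∘L inj 0),
      Fin.cons (conjOp e (C'' 0)) (fun j => conjOp e (N j)),
      fun i => conjOp e (C'' i.succ), ?_, ?_, ?_, ?_, ?_, ?_, ?_, ?_, ?_, ?_⟩
    · intro x
      simp only [ContinuousLinearMap.comp_apply, eCLM_apply]
      rw [e.norm_map, hW, inj0_norm]
    · refine Fin.cases ?_ ?_
      · exact isSelfAdjoint_conjOp _ (hC''sa 0)
      · exact fun j => isSelfAdjoint_conjOp _ (hNsa j)
    · refine Fin.cases ?_ ?_
      · refine Fin.cases ?_ ?_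
        · intro h; exact absurd rfl h
        · intro j _
          simp only [Fin.cons_zero, Fin.cons_succ]
          rw [conjOp_mul, conjOp_mul, hC''N 0 j, conjOp_neg]
      · intro j
        refine Fin.cases ?_ ?_
        · intro _
          simp only [Fin.cons_zero, Fin.cons_succ]
          rw [conjOp_mul, conjOp_mul, anticomm_symm (hC''N 0 j), conjOp_neg]
        · intro j' h
          simp only [Fin.cons_succ]
          rw [conjOp_mul, conjOp_mul, hNN j j' (fun hh => h (congrArg Fin.succ hh)), conjOp_neg]
    · refine Fin.cases ?_ ?_
      · simp only [Fin.cons_zero]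
        rw [conjOp_mul, hC''sq 0]
        simp only [hγ', Fin.cons_zero]
        rw [conjOp_smul_one]
      · intro j
        simp only [Fin.cons_succ]
        rw [conjOp_mul, hNsq j, conjOp_smul_one]
    · have key : ∀ T, adjoint (eCLM e ∘L (W ∘L inj 0)) ∘L conjOp e T ∘L (eCLM e ∘L (W ∘L inj 0))
          = adjoint (inj 0) ∘L (adjoint W ∘L T ∘L W) ∘L inj 0 := by
        intro T
        ext x
        simp [ContinuousLinearMap.adjoint_comp, adjoint_eCLM]
      refine Fin.cases ?_ ?_
      · simp only [Fin.cons_zero]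
        rw [key, hC''dil 0]
        simp only [hCc, Fin.cons_zero, hM0]
        exact corner _ _ _ _
      · intro j
        simp only [Fin.cons_succ]
        rw [key, hNdil j]
        simp only [hB]
        exact corner _ _ _ _
    · exact fun i => isSelfAdjoint_conjOp _ (hC''sa i.succ)
    · intro i i' h
      rw [conjOp_mul, conjOp_mul,
        hC''C'' i.succ i'.succ (fun hh => h (Fin.succ_injective _ hh)), conjOp_neg]
    · intro i
      refine Fin.cases ?_ ?_
      · simp only [Fin.cons_zero]
        rw [conjOp_mul, conjOp_mul, hC''C'' i.succ 0 (Fin.succ_ne_zero i), conjOp_neg]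
      · intro j
        simp only [Fin.cons_succ]
        rw [conjOp_mul, conjOp_mul, hC''N i.succ j, conjOp_neg]
    · intro i
      rw [conjOp_mul, hC''sq i.succ]
      simp only [hγ', Fin.cons_succ]
      rw [conjOp_smul_one]
    · intro i
      have key : adjoint (eCLM e ∘L (W ∘L inj 0)) ∘L conjOp e (C'' i.succ)
            ∘L (eCLM e ∘L (W ∘L inj 0))
          = adjoint (inj 0) ∘L (adjoint W ∘L C'' i.succ ∘L W) ∘L inj 0 := by
        ext x
        simp [ContinuousLinearMap.adjoint_comp, adjoint_eCLM]
      rw [key, hC''dil i.succ]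
      simp only [hCc, Fin.cons_succ]
      exact corner _ _ _ _

end Aux

/-- Let `A₁, …, A_d` be pairwise anticommuting self-adjoint operators on a complex Hilbert
space `H` with `‖A_j‖ ≤ a_j` for positive reals `a_j`. Then there exist pairwise
anticommuting self-adjoint operators `M₁, …, M_d` on `H ⊗ ℂ^{2^d}` (realized as the
`2^d`-fold Hilbert space (`ℓ²`) direct sum of `H`) with `M_j² = a_j² I`, such that each
`M_j` dilates `A_j`: `V* M_j V = A_j` for one common isometry `V : H → H ⊗ ℂ^{2^d}`. -/
theorem anticommuting_dilation_to_scaled_unitaries {H : Type*} [NormedAddCommGroup H]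
    [InnerProductSpace ℂ H] [CompleteSpace H]
    (d : ℕ) (A : Fin d → (H →L[ℂ] H)) (a : Fin d → ℝ) (ha : ∀ j, 0 < a j)
    (hsa : ∀ j, IsSelfAdjoint (A j))
    (hac : ∀ i j, i ≠ j → A i * A j = -(A j * A i))
    (hnorm : ∀ j, ‖A j‖ ≤ a j) :
    ∃ (V : H →L[ℂ] PiLp 2 (fun _ : Fin (2 ^ d) => H))
      (M : Fin d → (PiLp 2 (fun _ : Fin (2 ^ d) => H) →L[ℂ]
        PiLp 2 (fun _ : Fin (2 ^ d) => H))),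
      (∀ x, ‖V x‖ = ‖x‖) ∧
      (∀ j, IsSelfAdjoint (M j)) ∧
      (∀ i j, i ≠ j → M i * M j = -(M j * M i)) ∧
      (∀ j, M j * M j = ((a j ^ 2 : ℝ) : ℂ) • 1) ∧
      (∀ j, ContinuousLinearMap.adjoint V ∘L M j ∘L V = A j) := by
  obtain ⟨V, M, C', h1, h2, h3, h4, h5, _, _, _, _, _⟩ :=
    dilation_aux d H A a 0 (fun i => i.elim0) (fun i => i.elim0) hsa hac hnorm
      (fun j => (ha j).le) (fun i => i.elim0) (fun i => i.elim0) (fun i => i.elim0)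
      (fun i => i.elim0)
  exact ⟨V, M, h1, h2, h3, h4, h5⟩
end
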